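/- Let X and Y be pure simplicial complexes, X₀ ⊆ V(X) and Y₀ ⊆ V(Y), and assume that the pairs (sd X, X₀) and (sd Y, Y₀) are star decomposable in vertices. Then the pair (sd(X * Y), X₀ ⊔ Y₀) is star decomposable in vertices. Moreover, if |Y₀| = 1, then the pair (sd(X * Y), Y₀) is star decomposable in vertices. -/

import Mathlib

/-! Common definitions: finite abstract simplicial complexes, links, stars,
barycentric subdivision, joins, collapsibility, shellability, vertex
decomposability, star decomposability (also "in vertices"), and simplicial
homology (reduced, over ℤ and ℤ₂). -/

namespace Paper

open Finset

variable {V : Type*} [DecidableEq V]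

/-- `K` is a (finite, abstract) simplicial complex: downward closed family of finsets. -/
def IsCplx (K : Finset (Finset V)) : Prop :=
  ∀ σ ∈ K, ∀ τ ⊆ σ, τ ∈ K

/-- Vertex set of a complex. -/
def verts (K : Finset (Finset V)) : Finset V := K.sup id

/-- Dimension of a complex (as an integer; `-1` for `∅` and `{∅}`). -/
def dim (K : Finset (Finset V)) : ℤ := ((K.sup Finset.card : ℕ) : ℤ) - 1

/-- The facets (inclusion-maximal faces) of `K`. -/
def facets (K : Finset (Finset V)) : Finset (Finset V) :=
  K.filter fun σ => ∀ τ ∈ K, σ ⊆ τ → σ = τ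

/-- `K` is pure `d`-dimensional: it is nonempty, every face has dimension at most `d`
and every face is contained in a face of dimension exactly `d`. -/
def PureDim (K : Finset (Finset V)) (d : ℤ) : Prop :=
  K.Nonempty ∧ (∀ σ ∈ K, (σ.card : ℤ) ≤ d + 1) ∧
    ∀ σ ∈ K, ∃ τ ∈ K, σ ⊆ τ ∧ (τ.card : ℤ) = d + 1

/-- Link of a face. -/
def lk (σ : Finset V) (K : Finset (Finset V)) : Finset (Finset V) :=
  (K.filter fun τ => σ ⊆ τ).image fun τ => τ \ σ

/-- Closed star of a face. -/
def star (σ : Finset V) (K : Finset (Finset V)) : Finset (Finset V) :=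
  K.filter fun τ => τ ∪ σ ∈ K

/-- Union of the closed stars of a set of vertices. -/
def starSet (S : Finset V) (K : Finset (Finset V)) : Finset (Finset V) :=
  K.filter fun τ => ∃ v ∈ S, τ ∪ {v} ∈ K

/-- Subcomplex induced on a vertex set `S`. -/
def induced (S : Finset V) (K : Finset (Finset V)) : Finset (Finset V) :=
  K.filter fun σ => σ ⊆ S

/-- Deletion of a vertex:  `K - v`. -/
def deleteV (v : V) (K : Finset (Finset V)) : Finset (Finset V) :=
  K.filter fun σ => v ∉ σ

/-- The full simplex on vertex set `σ`. -/
def simplexCplx (σ : Finset V) : Finset (Finset V) := σ.powerset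

/-- The boundary `∂σ` of the simplex on `σ`: all proper subsets of `σ`. -/
def bdSimplex (σ : Finset V) : Finset (Finset V) := σ.powerset.erase σ

/-- Barycentric subdivision: vertices are the nonempty faces of `K`, faces are
chains of nonempty faces of `K`. -/
def sd (K : Finset (Finset V)) : Finset (Finset (Finset V)) :=
  if K = ∅ then ∅ else
    K.powerset.filter fun c => (∅ ∉ c) ∧ ∀ σ ∈ c, ∀ τ ∈ c, σ ⊆ τ ∨ τ ⊆ σ

/-- Join of two simplicial complexes (on the disjoint union of vertex types). -/
def join {α β : Type*} [DecidableEq α] [DecidableEq β]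
    (X : Finset (Finset α)) (Y : Finset (Finset β)) : Finset (Finset (α ⊕ β)) :=
  (X ×ˢ Y).image fun p => p.1.image Sum.inl ∪ p.2.image Sum.inr

/-- `K'` arises from `K` by an elementary collapse: remove a free face `σ`
together with the unique face `τ` properly containing it. -/
def ElemCollapse (K K' : Finset (Finset V)) : Prop :=
  ∃ σ ∈ K, ∃ τ ∈ K, σ ⊂ τ ∧ (∀ ρ ∈ K, σ ⊂ ρ → ρ = τ) ∧ K' = (K.erase σ).erase τ

/-- `K` collapses to `K'`. -/
def CollapsesTo (K K' : Finset (Finset V)) : Prop :=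
  Relation.ReflTransGen ElemCollapse K K'

/-- `K` is collapsible: it collapses to a single vertex. -/
def Collapsible (K : Finset (Finset V)) : Prop :=
  ∃ w : V, CollapsesTo K ({∅, {w}} : Finset (Finset V))

/-- The removal-collapsibility condition: `K` is empty, or becomes collapsible
after removal of a set of facets. -/
def RC (K : Finset (Finset V)) : Prop :=
  K = ∅ ∨ ∃ F ⊆ facets K, Collapsible (K \ F)

/-- The hereditary removal-collapsibility condition: the link of every face
(including the empty face, whose link is `K` itself) satisfies (RC). -/
def HRC (K : Finset (Finset V)) : Prop :=
  ∀ σ ∈ K, RC (lk σ K)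

/-- `K` is shellable: there is a total order of its facets such that each facet
meets the union of the previous ones in a pure complex of codimension one. -/
def Shellable (K : Finset (Finset V)) : Prop :=
  ∃ L : List (Finset V), L.Nodup ∧ L.toFinset = facets K ∧
    ∀ i : ℕ, (hi : i < L.length) → 1 ≤ i →
      PureDim ((L.get ⟨i, hi⟩).powerset ∩ ((L.take i).map Finset.powerset).foldr (· ∪ ·) ∅)
        (((L.get ⟨i, hi⟩).card : ℤ) - 2)

/-- Vertex decomposability (Provan–Billera) of a pure complex. -/
inductive VD : Finset (Finset V) → Prop
  | simplex (σ : Finset V) : VD σ.powerset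
  | shed (K : Finset (Finset V)) (v : V) (hv : {v} ∈ K)
      (hdel : PureDim (deleteV v K) (dim K)) (hVDdel : VD (deleteV v K))
      (hlk : PureDim (lk {v} K) (dim K - 1)) (hVDlk : VD (lk {v} K)) : VD K

/-- `L` is a shedding order of `K` (a total order on `V(K)`, given as a
duplicate-free list, witnessing vertex decomposability; once a simplex is
reached, an arbitrary order of its vertices qualifies). -/
inductive SheddingOrder : List V → Finset (Finset V) → Prop
  | simplex (σ : Finset V) (L : List V) (hnd : L.Nodup) (hfin : L.toFinset = σ) :
      SheddingOrder L σ.powerset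
  | cons (v : V) (L : List V) (K : Finset (Finset V)) (hv : {v} ∈ K) (hvL : v ∉ L)
      (hcov : insert v L.toFinset = verts K)
      (hdel : PureDim (deleteV v K) (dim K))
      (hrest : SheddingOrder L (deleteV v K))
      (hlk : PureDim (lk {v} K) (dim K - 1)) (hVDlk : VD (lk {v} K)) :
      SheddingOrder (v :: L) K

/-- `W` induces a star partition of `X`: the stars of the vertices of `W`
cover `X` and no two distinct vertices of `W` lie in a common face. -/
def StarPartition (W : Finset V) (X : Finset (Finset V)) : Prop :=
  (∀ σ ∈ X, ∃ w ∈ W, σ ∪ {w} ∈ X) ∧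
    ∀ w₁ ∈ W, ∀ w₂ ∈ W, w₁ ≠ w₂ → ¬∃ σ ∈ X, w₁ ∈ σ ∧ w₂ ∈ σ

/-- The overlap `O_X(x, W') = lk(x,X) ∩ st(W',X)`. -/
def overlap (X : Finset (Finset V)) (x : V) (W' : Finset V) : Finset (Finset V) :=
  lk {x} X ∩ starSet W' X

/-- Star decomposability of the pair `(X, X₀)`.  The total order on the set `W`
inducing the star partition is encoded as a duplicate-free list `L` (earlier in
the list = smaller in the order). -/
inductive StarDec : Finset (Finset V) → Finset V → Prop
  | base : StarDec ({∅} : Finset (Finset V)) (∅ : Finset V)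
  | step (X : Finset (Finset V)) (X₀ : Finset V) (k : ℤ) (hk : 0 ≤ k) (hpure : PureDim X k)
      (L : List V) (hne : L ≠ []) (hnd : L.Nodup) (hsub : L.toFinset ⊆ verts X)
      (hsp : StarPartition L.toFinset X)
      (horder : ∃ i < L.length, X₀ = (L.drop i).toFinset)
      (U : ℕ → Finset V)
      (hUne : ∀ i, i + 1 < L.length → (U i).Nonempty)
      (hUsub : ∀ i, (hi : i + 1 < L.length) →
        U i ⊆ verts (lk {L.get ⟨i, Nat.lt_of_succ_lt hi⟩} X))
      (hUst : ∀ i, (hi : i + 1 < L.length) →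
        starSet (U i) (lk {L.get ⟨i, Nat.lt_of_succ_lt hi⟩} X) =
          overlap X (L.get ⟨i, Nat.lt_of_succ_lt hi⟩) ((L.drop (i + 1)).toFinset))
      (hlink : ∀ i, (hi : i + 1 < L.length) →
        StarDec (lk {L.get ⟨i, Nat.lt_of_succ_lt hi⟩} X) (U i))
      (Ulast : Finset V)
      (hlast : StarDec (lk {L.getLast hne} X) Ulast) :
      StarDec X X₀

/-- The order encoded by the list `L` induces a star decomposition of `(X, X₀)`. -/
def InducesStarDecomp (L : List V) (X : Finset (Finset V)) (X₀ : Finset V) : Prop :=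
  (L = [] ∧ X = ({∅} : Finset (Finset V)) ∧ X₀ = ∅) ∨
  ∃ hne : L ≠ [], L.Nodup ∧ StarPartition L.toFinset X ∧
    (∃ i < L.length, X₀ = (L.drop i).toFinset) ∧
    (∀ i, (hi : i + 1 < L.length) →
      ∃ U : Finset V, U.Nonempty ∧ U ⊆ verts (lk {L.get ⟨i, Nat.lt_of_succ_lt hi⟩} X) ∧
        starSet U (lk {L.get ⟨i, Nat.lt_of_succ_lt hi⟩} X) =
          overlap X (L.get ⟨i, Nat.lt_of_succ_lt hi⟩) ((L.drop (i + 1)).toFinset) ∧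
        StarDec (lk {L.get ⟨i, Nat.lt_of_succ_lt hi⟩} X) U) ∧
    (∃ U : Finset V, StarDec (lk {L.getLast hne} X) U)

/-- Star decomposability *in vertices* of the pair `(sd Y, Y₀)`; the data is the
underlying complex `Y` together with `Y₀ ⊆ V(Y)`.  The total order on `V(Y)` is
encoded as a duplicate-free list `L`. -/
inductive StarDecV : Finset (Finset V) → Finset V → Prop
  | base : StarDecV ({∅} : Finset (Finset V)) (∅ : Finset V)
  | step (Y : Finset (Finset V)) (Y₀ : Finset V) (k : ℤ) (hk : 0 ≤ k) (hpure : PureDim Y k)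
      (L : List V) (hne : L ≠ []) (hnd : L.Nodup) (hV : L.toFinset = verts Y)
      (horder : ∃ i < L.length, Y₀ = (L.drop i).toFinset)
      (hlink : ∀ i, (hi : i + 1 < L.length) →
        StarDecV (lk {L.get ⟨i, Nat.lt_of_succ_lt hi⟩} Y)
          (verts (lk {L.get ⟨i, Nat.lt_of_succ_lt hi⟩} Y) ∩ (L.drop (i + 1)).toFinset))
      (hlast : StarDecV (lk {L.getLast hne} Y) (verts (lk {L.getLast hne} Y))) :
      StarDecV Y Y₀

/-- The order encoded by the list `L` induces a star decomposition of
`(sd Y, Y₀)` in vertices. -/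
def InducesStarDecompV (L : List V) (Y : Finset (Finset V)) (Y₀ : Finset V) : Prop :=
  (L = [] ∧ Y = ({∅} : Finset (Finset V)) ∧ Y₀ = ∅) ∨
  ∃ hne : L ≠ [], L.Nodup ∧ L.toFinset = verts Y ∧
    (∃ i < L.length, Y₀ = (L.drop i).toFinset) ∧
    (∀ i, (hi : i + 1 < L.length) →
      StarDecV (lk {L.get ⟨i, Nat.lt_of_succ_lt hi⟩} Y)
        (verts (lk {L.get ⟨i, Nat.lt_of_succ_lt hi⟩} Y) ∩ (L.drop (i + 1)).toFinset)) ∧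
    StarDecV (lk {L.getLast hne} Y) (verts (lk {L.getLast hne} Y))

/-- Simplicial isomorphism between two complexes. -/
def SimpIso {α β : Type*} [DecidableEq α] [DecidableEq β]
    (K : Finset (Finset α)) (L : Finset (Finset β)) : Prop :=
  ∃ f : α → β, Set.InjOn f ↑(verts K) ∧ K.image (fun σ => σ.image f) = L

/-- Simplicial isomorphism of pairs (complex, subcomplex). -/
def SimpIsoPair {α β : Type*} [DecidableEq α] [DecidableEq β]
    (K K₁ : Finset (Finset α)) (L L₁ : Finset (Finset β)) : Prop :=
  ∃ f : α → β, Set.InjOn f ↑(verts K) ∧ K.image (fun σ => σ.image f) = L ∧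
    K₁.image (fun σ => σ.image f) = L₁

/-! Reduced simplicial homology (the empty face is included, so the chain
complex below, graded by cardinality of faces, computes *reduced* homology). -/

/-- Faces of `K` of cardinality `n`. -/
def kfaces (K : Finset (Finset V)) (n : ℕ) : Finset (Finset V) :=
  K.filter fun σ => σ.card = n

/-- The mod 2 boundary operator, from chains on faces of cardinality `n+1`
to chains on faces of cardinality `n`. -/
noncomputable def bdry2 (K : Finset (Finset V)) (n : ℕ) :
    (↥(kfaces K (n + 1)) → ZMod 2) →ₗ[ZMod 2] (↥(kfaces K n) → ZMod 2) :=
  Matrix.mulVecLin (Matrix.of fun (τ : ↥(kfaces K n)) (σ : ↥(kfaces K (n + 1))) =>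
    if (τ : Finset V) ⊆ (σ : Finset V) then (1 : ZMod 2) else 0)

/-- The reduced Betti number `β̃ᵢ(K; ℤ₂)`. -/
noncomputable def betti2 (K : Finset (Finset V)) (i : ℕ) : ℕ :=
  Module.finrank (ZMod 2) (LinearMap.ker (bdry2 K i)) -
    Module.finrank (ZMod 2) (LinearMap.range (bdry2 K (i + 1)))

/-- Signed incidence coefficient (with respect to an arbitrary, but fixed,
linear order on the vertices; reduced homology does not depend on the choice). -/
noncomputable def coeffInt (σ τ : Finset V) : ℤ :=
  letI : LinearOrder V := IsWellOrder.linearOrder WellOrderingRel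
  (σ \ τ).sum fun v => (-1 : ℤ) ^ ((σ.filter fun u => u < v).card)

/-- The integral boundary operator, from chains on faces of cardinality `n+1`
to chains on faces of cardinality `n`. -/
noncomputable def bdryZ (K : Finset (Finset V)) (n : ℕ) :
    (↥(kfaces K (n + 1)) → ℤ) →ₗ[ℤ] (↥(kfaces K n) → ℤ) :=
  Matrix.mulVecLin (Matrix.of fun (τ : ↥(kfaces K n)) (σ : ↥(kfaces K (n + 1))) =>
    if (τ : Finset V) ⊆ (σ : Finset V) then coeffInt (σ : Finset V) (τ : Finset V) else 0)

/-- `K` has trivial reduced (integral) homology: `H̃ₙ(K; ℤ) = 0` for all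
`n ≥ -1`. -/
def TrivialRedHomology (K : Finset (Finset V)) : Prop :=
  K.Nonempty ∧ LinearMap.range (bdryZ K 0) = ⊤ ∧
    ∀ n : ℕ, LinearMap.ker (bdryZ K n) = LinearMap.range (bdryZ K (n + 1))

/-- Reduced Euler characteristic. -/
def redEuler (K : Finset (Finset V)) : ℤ :=
  (∑ σ ∈ K.filter fun σ => σ ≠ ∅, (-1 : ℤ) ^ (σ.card - 1)) - 1


/-! ### Auxiliary lemmas for Statement 9 -/

section Aux

set_option linter.unusedSectionVars false
set_option linter.unusedVariables false

lemma mem_verts {K : Finset (Finset V)} {v : V} : v ∈ verts K ↔ ∃ σ ∈ K, v ∈ σ := by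
  simp [verts, Finset.mem_sup, id]

lemma singleton_mem_of_mem_verts {K : Finset (Finset V)} {v : V} (hK : IsCplx K)
    (hv : v ∈ verts K) : {v} ∈ K := by
  obtain ⟨σ, hσ, hvσ⟩ := mem_verts.1 hv
  exact hK σ hσ {v} (by simpa using hvσ)

lemma empty_mem_of_cplx {K : Finset (Finset V)} (hK : IsCplx K) (h : K.Nonempty) : ∅ ∈ K := by
  obtain ⟨σ, hσ⟩ := h
  exact hK σ hσ ∅ (Finset.empty_subset _)

lemma mem_lk {K : Finset (Finset V)} {v : V} {τ : Finset V} :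
    τ ∈ lk {v} K ↔ ∃ σ ∈ K, v ∈ σ ∧ σ \ {v} = τ := by
  simp [lk, Finset.mem_image, Finset.mem_filter, Finset.singleton_subset_iff]
  tauto

lemma cplx_lk {K : Finset (Finset V)} {v : V} (hK : IsCplx K) : IsCplx (lk {v} K) := by
  intro τ hτ τ' hτ'
  obtain ⟨σ, hσ, hvσ, hστ⟩ := mem_lk.1 hτ
  refine mem_lk.2 ⟨insert v τ', hK σ hσ _ ?_, Finset.mem_insert_self _ _, ?_⟩
  · intro x hx
    rcases Finset.mem_insert.1 hx with rfl | hx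
    · exact hvσ
    · have := hτ' hx; rw [← hστ] at this; exact (Finset.mem_sdiff.1 this).1
  · have hvτ' : v ∉ τ' := by
      intro hv; have := hτ' hv; rw [← hστ] at this
      simp at this
    rw [Finset.insert_sdiff_of_mem _ (Finset.mem_singleton_self v),
      Finset.sdiff_singleton_eq_erase, Finset.erase_eq_of_notMem hvτ']

lemma empty_mem_lk {K : Finset (Finset V)} {v : V} (hv : {v} ∈ K) : ∅ ∈ lk {v} K :=
  mem_lk.2 ⟨{v}, hv, Finset.mem_singleton_self v, by simp⟩

lemma pure_lk {K : Finset (Finset V)} {v : V} {k : ℤ} (hK : IsCplx K) (hp : PureDim K k)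
    (hv : {v} ∈ K) : PureDim (lk {v} K) (k - 1) := by
  obtain ⟨-, hbd, hext⟩ := hp
  refine ⟨⟨∅, empty_mem_lk hv⟩, ?_, ?_⟩
  · intro τ hτ
    obtain ⟨σ, hσ, hvσ, rfl⟩ := mem_lk.1 hτ
    have hc : (σ \ {v}).card = σ.card - 1 := by
      rw [Finset.card_sdiff_of_subset (by simpa using hvσ)]; simp
    have h1 : 1 ≤ σ.card := Finset.card_pos.2 ⟨v, hvσ⟩
    have := hbd σ hσ
    rw [hc]
    push_cast [h1]
    omega
  · intro τ hτ
    obtain ⟨σ, hσ, hvσ, rfl⟩ := mem_lk.1 hτ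
    obtain ⟨ρ, hρ, hσρ, hcard⟩ := hext σ hσ
    refine ⟨ρ \ {v}, mem_lk.2 ⟨ρ, hρ, hσρ hvσ, rfl⟩, Finset.sdiff_subset_sdiff hσρ le_rfl, ?_⟩
    have hvρ : v ∈ ρ := hσρ hvσ
    have hc : (ρ \ {v}).card = ρ.card - 1 := by
      rw [Finset.card_sdiff_of_subset (by simpa using hvρ)]; simp
    have h1 : 1 ≤ ρ.card := Finset.card_pos.2 ⟨v, hvρ⟩
    rw [hc]
    push_cast [h1]
    omega

lemma card_lk_lt {K : Finset (Finset V)} {v : V} (hK : IsCplx K) (h : K.Nonempty) :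
    (lk {v} K).card < K.card := by
  have h1 : (lk {v} K).card ≤ (K.filter fun τ => {v} ⊆ τ).card := Finset.card_image_le
  have h2 : (K.filter fun τ => {v} ⊆ τ) ⊆ K.erase ∅ := by
    intro τ hτ
    rw [Finset.mem_filter] at hτ
    refine Finset.mem_erase.2 ⟨?_, hτ.1⟩
    intro he; subst he; simpa using hτ.2
  have h3 : (K.erase ∅).card < K.card :=
    Finset.card_erase_lt_of_mem (empty_mem_of_cplx hK h)
  exact lt_of_le_of_lt (h1.trans (Finset.card_le_card h2)) h3

end Aux

section JoinAux

set_option linter.unusedSectionVars false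
set_option linter.unusedVariables false

variable {α β : Type*} [DecidableEq α] [DecidableEq β]

lemma mem_join {X : Finset (Finset α)} {Y : Finset (Finset β)} {τ : Finset (α ⊕ β)} :
    τ ∈ join X Y ↔ ∃ σ ∈ X, ∃ ρ ∈ Y, σ.image Sum.inl ∪ ρ.image Sum.inr = τ := by
  constructor
  · intro h
    obtain ⟨p, hp, hpe⟩ := Finset.mem_image.1 h
    obtain ⟨h1, h2⟩ := Finset.mem_product.1 hp
    exact ⟨p.1, h1, p.2, h2, hpe⟩
  · rintro ⟨σ, hσ, ρ, hρ, h⟩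
    exact Finset.mem_image.2 ⟨(σ, ρ), Finset.mem_product.2 ⟨hσ, hρ⟩, h⟩

lemma cplx_join {X : Finset (Finset α)} {Y : Finset (Finset β)} (hX : IsCplx X)
    (hY : IsCplx Y) : IsCplx (join X Y) := by
  intro τ hτ τ' hτ'
  obtain ⟨σ, hσ, ρ, hρ, rfl⟩ := mem_join.1 hτ
  refine mem_join.2 ⟨σ.filter (fun a => Sum.inl a ∈ τ'), hX σ hσ _ (Finset.filter_subset _ _),
    ρ.filter (fun b => Sum.inr b ∈ τ'), hY ρ hρ _ (Finset.filter_subset _ _), ?_⟩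
  ext x
  cases x with
  | inl a =>
    simp only [Finset.mem_union, Finset.mem_image, Finset.mem_filter]
    constructor
    · rintro (⟨a', ⟨ha', hm⟩, h⟩ | ⟨b, ⟨hb, hm⟩, h⟩)
      · cases Sum.inl.inj h; exact hm
      · exact absurd h (by simp)
    · intro h
      have := hτ' h
      simp only [Finset.mem_union, Finset.mem_image] at this
      rcases this with ⟨a', ha', he⟩ | ⟨b, hb, he⟩
      · cases Sum.inl.inj he; exact Or.inl ⟨a, ⟨ha', h⟩, rfl⟩
      · exact absurd he (by simp)
  | inr b =>
    simp only [Finset.mem_union, Finset.mem_image, Finset.mem_filter]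
    constructor
    · rintro (⟨a', ⟨ha', hm⟩, h⟩ | ⟨b', ⟨hb', hm⟩, h⟩)
      · exact absurd h (by simp)
      · cases Sum.inr.inj h; exact hm
    · intro h
      have := hτ' h
      simp only [Finset.mem_union, Finset.mem_image] at this
      rcases this with ⟨a', ha', he⟩ | ⟨b', hb', he⟩
      · exact absurd he (by simp)
      · cases Sum.inr.inj he; exact Or.inr ⟨b, ⟨hb', h⟩, rfl⟩

lemma verts_join {X : Finset (Finset α)} {Y : Finset (Finset β)} (hX : X.Nonempty)
    (hY : Y.Nonempty) :
    verts (join X Y) = (verts X).image Sum.inl ∪ (verts Y).image Sum.inr := by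
  obtain ⟨σ₀, hσ₀⟩ := hX
  obtain ⟨ρ₀, hρ₀⟩ := hY
  ext x
  simp only [Finset.mem_union, Finset.mem_image, mem_verts]
  constructor
  · rintro ⟨τ, hτ, hx⟩
    obtain ⟨σ, hσ, ρ, hρ, rfl⟩ := mem_join.1 hτ
    simp only [Finset.mem_union, Finset.mem_image] at hx
    rcases hx with ⟨a, ha, rfl⟩ | ⟨b, hb, rfl⟩
    · exact Or.inl ⟨a, ⟨σ, hσ, ha⟩, rfl⟩
    · exact Or.inr ⟨b, ⟨ρ, hρ, hb⟩, rfl⟩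
  · rintro (⟨a, ⟨σ, hσ, ha⟩, rfl⟩ | ⟨b, ⟨ρ, hρ, hb⟩, rfl⟩)
    · exact ⟨_, mem_join.2 ⟨σ, hσ, ρ₀, hρ₀, rfl⟩, by simp [ha]⟩
    · exact ⟨_, mem_join.2 ⟨σ₀, hσ₀, ρ, hρ, rfl⟩, by simp [hb]⟩

lemma union_sdiff_inl {σ : Finset α} {ρ : Finset β} {v : α} :
    (σ.image Sum.inl ∪ ρ.image Sum.inr) \ {Sum.inl v} =
      ((σ \ {v}).image Sum.inl ∪ ρ.image Sum.inr : Finset (α ⊕ β)) := by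
  ext x
  cases x <;> simp [Sum.inl.injEq, and_comm] <;> tauto

lemma union_sdiff_inr {σ : Finset α} {ρ : Finset β} {w : β} :
    (σ.image Sum.inl ∪ ρ.image Sum.inr) \ {Sum.inr w} =
      (σ.image Sum.inl ∪ (ρ \ {w}).image Sum.inr : Finset (α ⊕ β)) := by
  ext x
  cases x <;> simp [Sum.inr.injEq, and_comm] <;> tauto

lemma lk_inl_join {X : Finset (Finset α)} {Y : Finset (Finset β)} {v : α} :
    lk {Sum.inl v} (join X Y) = join (lk {v} X) Y := by
  ext τ
  rw [mem_lk, mem_join]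
  constructor
  · rintro ⟨τ', hτ', hv, rfl⟩
    obtain ⟨σ, hσ, ρ, hρ, rfl⟩ := mem_join.1 hτ'
    have hvσ : v ∈ σ := by
      simp only [Finset.mem_union, Finset.mem_image] at hv
      rcases hv with ⟨a, ha, he⟩ | ⟨b, hb, he⟩
      · cases Sum.inl.inj he; exact ha
      · exact absurd he (by simp)
    exact ⟨σ \ {v}, mem_lk.2 ⟨σ, hσ, hvσ, rfl⟩, ρ, hρ, union_sdiff_inl.symm⟩
  · rintro ⟨σ', hσ', ρ, hρ, rfl⟩
    obtain ⟨σ, hσ, hvσ, rfl⟩ := mem_lk.1 hσ'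
    refine ⟨σ.image Sum.inl ∪ ρ.image Sum.inr, mem_join.2 ⟨σ, hσ, ρ, hρ, rfl⟩,
      by simp [hvσ], union_sdiff_inl⟩

lemma lk_inr_join {X : Finset (Finset α)} {Y : Finset (Finset β)} {w : β} :
    lk {Sum.inr w} (join X Y) = join X (lk {w} Y) := by
  ext τ
  rw [mem_lk, mem_join]
  constructor
  · rintro ⟨τ', hτ', hw, rfl⟩
    obtain ⟨σ, hσ, ρ, hρ, rfl⟩ := mem_join.1 hτ'
    have hwρ : w ∈ ρ := by
      simp only [Finset.mem_union, Finset.mem_image] at hw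
      rcases hw with ⟨a, ha, he⟩ | ⟨b, hb, he⟩
      · exact absurd he (by simp)
      · cases Sum.inr.inj he; exact hb
    exact ⟨σ, hσ, ρ \ {w}, mem_lk.2 ⟨ρ, hρ, hwρ, rfl⟩, union_sdiff_inr.symm⟩
  · rintro ⟨σ, hσ, ρ', hρ', rfl⟩
    obtain ⟨ρ, hρ, hwρ, rfl⟩ := mem_lk.1 hρ'
    refine ⟨σ.image Sum.inl ∪ ρ.image Sum.inr, mem_join.2 ⟨σ, hσ, ρ, hρ, rfl⟩,
      by simp [hwρ], union_sdiff_inr⟩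

lemma card_union_images {σ : Finset α} {ρ : Finset β} :
    (σ.image Sum.inl ∪ ρ.image Sum.inr : Finset (α ⊕ β)).card = σ.card + ρ.card := by
  rw [Finset.card_union_of_disjoint, Finset.card_image_of_injective _ Sum.inl_injective,
    Finset.card_image_of_injective _ Sum.inr_injective]
  simp [Finset.disjoint_left]

lemma pure_join {X : Finset (Finset α)} {Y : Finset (Finset β)} {a b : ℤ}
    (hX : PureDim X a) (hY : PureDim Y b) : PureDim (join X Y) (a + b + 1) := by
  obtain ⟨hXne, hXbd, hXext⟩ := hX
  obtain ⟨hYne, hYbd, hYext⟩ := hY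
  obtain ⟨σ₀, hσ₀⟩ := hXne
  obtain ⟨ρ₀, hρ₀⟩ := hYne
  refine ⟨⟨_, mem_join.2 ⟨σ₀, hσ₀, ρ₀, hρ₀, rfl⟩⟩, ?_, ?_⟩
  · intro τ hτ
    obtain ⟨σ, hσ, ρ, hρ, rfl⟩ := mem_join.1 hτ
    have := hXbd σ hσ
    have := hYbd ρ hρ
    rw [card_union_images]
    push_cast
    omega
  · intro τ hτ
    obtain ⟨σ, hσ, ρ, hρ, rfl⟩ := mem_join.1 hτ
    obtain ⟨σ', hσ', hσσ', hca⟩ := hXext σ hσ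
    obtain ⟨ρ', hρ', hρρ', hcb⟩ := hYext ρ hρ
    refine ⟨_, mem_join.2 ⟨σ', hσ', ρ', hρ', rfl⟩,
      Finset.union_subset_union (Finset.image_subset_image hσσ')
        (Finset.image_subset_image hρρ'), ?_⟩
    rw [card_union_images]
    push_cast
    omega

lemma inl_inr_inter (P R : Finset α) (Q S : Finset β) :
    ((P.image Sum.inl ∪ Q.image Sum.inr) ∩ (R.image Sum.inl ∪ S.image Sum.inr)
      : Finset (α ⊕ β)) = (P ∩ R).image Sum.inl ∪ (Q ∩ S).image Sum.inr := by
  ext x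
  cases x <;> simp [Sum.inl.injEq, Sum.inr.injEq] <;> aesop

end JoinAux

section ListAux

variable {γ δ : Type*}

lemma decomp_get {L P S : List γ} {v : γ} (h : L = P ++ v :: S) :
    ∃ hi : P.length < L.length, L.get ⟨P.length, hi⟩ = v ∧ L.drop (P.length + 1) = S := by
  subst h
  refine ⟨by simp, ?_, ?_⟩
  · rw [List.get_eq_getElem, List.getElem_append_right (le_refl P.length)]
    simp
  · rw [List.drop_append]
    simp

lemma append_eq_append_cons {l₁ l₂ P S : List γ} {v : γ} (h : l₁ ++ l₂ = P ++ v :: S) :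
    (∃ S₁, l₁ = P ++ v :: S₁ ∧ S = S₁ ++ l₂) ∨ (∃ P₂, P = l₁ ++ P₂ ∧ l₂ = P₂ ++ v :: S) := by
  induction l₁ generalizing P with
  | nil => exact Or.inr ⟨P, by simpa using h.symm, by simpa using h⟩
  | cons a l₁ ih =>
    cases P with
    | nil =>
      simp only [List.nil_append, List.cons_append, List.cons.injEq] at h ⊢
      exact Or.inl ⟨l₁, ⟨h.1, rfl⟩, h.2.symm⟩
    | cons p P =>
      simp only [List.cons_append, List.cons.injEq] at h
      obtain ⟨rfl, h⟩ := h
      rcases ih h with ⟨S₁, h1, h2⟩ | ⟨P₂, h1, h2⟩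
      · exact Or.inl ⟨S₁, by rw [h1]; simp, h2⟩
      · exact Or.inr ⟨P₂, by rw [h1]; simp, h2⟩

lemma map_eq_append_cons {f : γ → δ} {l : List γ} {P S : List δ} {v : δ}
    (h : l.map f = P ++ v :: S) :
    ∃ P' x S', l = P' ++ x :: S' ∧ P = P'.map f ∧ v = f x ∧ S = S'.map f := by
  induction l generalizing P with
  | nil => simp at h
  | cons a l ih =>
    cases P with
    | nil =>
      simp only [List.map_cons, List.nil_append, List.cons.injEq] at h
      exact ⟨[], a, l, rfl, rfl, h.1.symm, h.2.symm⟩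
    | cons p P =>
      simp only [List.map_cons, List.cons_append, List.cons.injEq] at h
      obtain ⟨rfl, h⟩ := h
      obtain ⟨P', x, S', h1, h2, h3, h4⟩ := ih h
      exact ⟨a :: P', x, S', by rw [h1]; simp, by rw [h2]; simp, h3, h4⟩

lemma last_of_append_singleton {l P : List γ} {v : γ} (h : l = P ++ [v]) (hne : l ≠ []) :
    l.getLast hne = v := by
  subst h; simp [List.getLast_append]

lemma toFinset_map_list [DecidableEq γ] [DecidableEq δ] (f : γ → δ) (l : List γ) :
    (l.map f).toFinset = l.toFinset.image f := by
  ext x; simp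

end ListAux

section Builder

set_option linter.unusedSectionVars false

/-- Constructor for `StarDecV` phrased via list decompositions. -/
lemma stepBuilder (Y : Finset (Finset V)) (Y₀ : Finset V) (k : ℤ) (hk : 0 ≤ k)
    (hpure : PureDim Y k) (L : List V) (hne : L ≠ []) (hnd : L.Nodup)
    (hV : L.toFinset = verts Y)
    (horder : ∃ P S, L = P ++ S ∧ S ≠ [] ∧ Y₀ = S.toFinset)
    (hlink : ∀ P v S, L = P ++ v :: S → S ≠ [] →
      StarDecV (lk {v} Y) (verts (lk {v} Y) ∩ S.toFinset))
    (hlast : ∀ P v, L = P ++ [v] → StarDecV (lk {v} Y) (verts (lk {v} Y))) :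
    StarDecV Y Y₀ := by
  obtain ⟨P, S, hPS, hSne, hY₀⟩ := horder
  refine StarDecV.step Y Y₀ k hk hpure L hne hnd hV ⟨P.length, ?_, ?_⟩ ?_ ?_
  · subst hPS; cases S with
    | nil => exact absurd rfl hSne
    | cons s S => simp
  · subst hPS hY₀; rw [List.drop_left]
  · intro i hi
    have hdec : L = L.take i ++ L.get ⟨i, Nat.lt_of_succ_lt hi⟩ :: L.drop (i + 1) := by
      rw [List.get_eq_getElem,
        List.getElem_cons_drop (Nat.lt_of_succ_lt hi), List.take_append_drop]
    exact hlink _ _ _ hdec (by simp [List.drop_eq_nil_iff]; omega)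
  · have hdec : L = L.dropLast ++ [L.getLast hne] := (List.dropLast_append_getLast hne).symm
    exact hlast _ _ hdec

/-- `StarDecV` holds for every suffix, given a single step witness; the fields of a
`step` are recorded via this helper. -/
lemma stepAny (Y : Finset (Finset V)) (k : ℤ) (hk : 0 ≤ k) (hpure : PureDim Y k)
    (L : List V) (hne : L ≠ []) (hnd : L.Nodup) (hV : L.toFinset = verts Y)
    (hlink : ∀ i, (hi : i + 1 < L.length) →
      StarDecV (lk {L.get ⟨i, Nat.lt_of_succ_lt hi⟩} Y)
        (verts (lk {L.get ⟨i, Nat.lt_of_succ_lt hi⟩} Y) ∩ (L.drop (i + 1)).toFinset))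
    (hlast : StarDecV (lk {L.getLast hne} Y) (verts (lk {L.getLast hne} Y)))
    (P S : List V) (hPS : L = P ++ S) (hSne : S ≠ []) : StarDecV Y S.toFinset := by
  refine StarDecV.step Y _ k hk hpure L hne hnd hV ⟨P.length, ?_, ?_⟩ hlink hlast
  · subst hPS; cases S with
    | nil => exact absurd rfl hSne
    | cons s S => simp
  · subst hPS; rw [List.drop_left]

/-- Link condition of a `step`, phrased via decompositions. -/
lemma linkOf (Y : Finset (Finset V)) (L : List V)
    (hlink : ∀ i, (hi : i + 1 < L.length) →
      StarDecV (lk {L.get ⟨i, Nat.lt_of_succ_lt hi⟩} Y)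
        (verts (lk {L.get ⟨i, Nat.lt_of_succ_lt hi⟩} Y) ∩ (L.drop (i + 1)).toFinset))
    (P : List V) (v : V) (S : List V) (hPS : L = P ++ v :: S) (hSne : S ≠ []) :
    StarDecV (lk {v} Y) (verts (lk {v} Y) ∩ S.toFinset) := by
  obtain ⟨hi, hget, hdrop⟩ := decomp_get hPS
  have hi' : P.length + 1 < L.length := by
    subst hPS; cases S with
    | nil => exact absurd rfl hSne
    | cons s S => simp
  have := hlink P.length hi'
  rw [show L.get ⟨P.length, Nat.lt_of_succ_lt hi'⟩ = v from hget, hdrop] at this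
  exact this

/-- Last-vertex condition of a `step`, phrased via decompositions. -/
lemma lastOf (Y : Finset (Finset V)) (L : List V) (hne : L ≠ [])
    (hlast : StarDecV (lk {L.getLast hne} Y) (verts (lk {L.getLast hne} Y)))
    (P : List V) (v : V) (hPS : L = P ++ [v]) :
    StarDecV (lk {v} Y) (verts (lk {v} Y)) := by
  have : L.getLast hne = v := by
    subst hPS; simp [List.getLast_append]
  rwa [this] at hlast

end Builder

section MainAux

set_option linter.unusedSectionVars false
set_option linter.unusedVariables false

lemma cplx_single_empty : IsCplx ({∅} : Finset (Finset V)) := by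
  intro σ hσ τ hτ
  simp only [Finset.mem_singleton] at hσ ⊢
  subst hσ
  exact Finset.subset_empty.1 hτ

lemma pure_single_empty : PureDim ({∅} : Finset (Finset V)) (-1) := by
  refine ⟨⟨∅, Finset.mem_singleton_self _⟩, ?_, ?_⟩
  · intro σ hσ
    simp only [Finset.mem_singleton] at hσ
    subst hσ; simp
  · intro σ hσ
    exact ⟨σ, hσ, le_rfl, by simp only [Finset.mem_singleton] at hσ; subst hσ; simp⟩

lemma verts_single_empty : verts ({∅} : Finset (Finset V)) = ∅ := by
  simp [verts]

variable {α β : Type*} [DecidableEq α] [DecidableEq β]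

lemma joinAux : ∀ N : ℕ, ∀ (X : Finset (Finset α)) (Y : Finset (Finset β)),
    X.card + Y.card ≤ N → IsCplx X → IsCplx Y →
    ∀ (X₀ : Finset α) (Y₀ : Finset β), X₀ ⊆ verts X → Y₀ ⊆ verts Y →
    StarDecV X X₀ → StarDecV Y Y₀ →
    StarDecV (join X Y) (X₀.image Sum.inl ∪ Y₀.image Sum.inr) ∧
      (Y₀.card = 1 → StarDecV (join X Y) (Y₀.image Sum.inr)) := by
  intro N
  induction N with
  | zero =>
    intro X Y hcard hX hY X₀ Y₀ hX₀ hY₀ h1 h2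
    exfalso
    have hXne : X.Nonempty := by
      rcases h1 with - | ⟨_, _, _, _, hpure, _⟩
      · exact ⟨∅, Finset.mem_singleton_self _⟩
      · exact hpure.1
    have := Finset.card_pos.2 hXne
    omega
  | succ N ih =>
    intro X Y hcard hX hY X₀ Y₀ hX₀ hY₀ h1 h2
    cases h1 with
    | base =>
      cases h2 with
      | base =>
        -- X = {∅}, Y = {∅}
        have hJ : join ({∅} : Finset (Finset α)) ({∅} : Finset (Finset β)) =
            ({∅} : Finset (Finset (α ⊕ β))) := by
          ext τ
          rw [mem_join]
          simp [eq_comm]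
        rw [hJ]
        constructor
        · simpa using StarDecV.base
        · intro h; simp at h
      | step _ _ kY hkY hpureY Ly hneY hndY hVY hordY hlinkY hlastY =>
        -- X = {∅}
        obtain ⟨iY, hiY, hY₀eq⟩ := hordY
        have hYne : Y.Nonempty := hpureY.1
        have hXsne : ({∅} : Finset (Finset α)).Nonempty := ⟨∅, Finset.mem_singleton_self _⟩
        have hpureJ : PureDim (join ({∅} : Finset (Finset α)) Y) kY := by
          have := pure_join (pure_single_empty (V := α)) hpureY
          rwa [show (-1 : ℤ) + kY + 1 = kY by ring] at this
        have hvertsJ : verts (join ({∅} : Finset (Finset α)) Y) = (verts Y).image Sum.inr := by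
          rw [verts_join hXsne hYne, verts_single_empty]
          simp
        have hmem_Ly : ∀ b, b ∈ Ly → b ∈ verts Y := by
          intro b hb; rw [← hVY]; exact List.mem_toFinset.2 hb
        have hmain : StarDecV (join ({∅} : Finset (Finset α)) Y) (Y₀.image Sum.inr) := by
          refine stepBuilder _ _ kY hkY hpureJ (Ly.map Sum.inr) (by simp [hneY])
            (hndY.map Sum.inr_injective) ?_ ?_ ?_ ?_
          · rw [toFinset_map_list, hVY, hvertsJ]
          · refine ⟨(Ly.take iY).map Sum.inr, (Ly.drop iY).map Sum.inr, ?_, ?_, ?_⟩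
            · rw [← List.map_append, List.take_append_drop]
            · simp only [ne_eq, List.map_eq_nil_iff, List.drop_eq_nil_iff, not_le]
              omega
            · rw [toFinset_map_list, hY₀eq]
          · intro P v S hPS hSne
            obtain ⟨P', y, S', hLy', hP', rfl, rfl⟩ := map_eq_append_cons hPS
            have hS'ne : S' ≠ [] := by intro h; subst h; exact hSne rfl
            have hy : y ∈ verts Y := hmem_Ly y (by rw [hLy']; simp)
            have hlkne : (lk {y} Y).Nonempty :=
              ⟨∅, empty_mem_lk (singleton_mem_of_mem_verts hY hy)⟩
            have hlk := linkOf Y Ly hlinkY P' y S' hLy' hS'ne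
            have hihc : ({∅} : Finset (Finset α)).card + (lk {y} Y).card ≤ N := by
              have h1 := card_lk_lt (v := y) hY hYne
              simp only [Finset.card_singleton] at hcard ⊢
              omega
            have hres := (ih {∅} (lk {y} Y) hihc cplx_single_empty (cplx_lk hY) ∅
              (verts (lk {y} Y) ∩ S'.toFinset) (Finset.empty_subset _)
              Finset.inter_subset_left StarDecV.base hlk).1
            rw [lk_inr_join]
            have hset : verts (join ({∅} : Finset (Finset α)) (lk {y} Y)) ∩
                ((S'.map Sum.inr).toFinset) =
                (∅ : Finset α).image Sum.inl ∪
                  ((verts (lk {y} Y) ∩ S'.toFinset).image Sum.inr) := by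
              rw [verts_join hXsne hlkne, verts_single_empty, toFinset_map_list]
              ext z
              cases z <;> simp
            rw [hset]
            exact hres
          · intro P v hPS
            obtain ⟨P', y, S', hLy', hP', rfl, hS'⟩ := map_eq_append_cons hPS
            have : S' = [] := by
              cases S' with
              | nil => rfl
              | cons a t => simp at hS'
            subst this
            have hy : y ∈ verts Y := hmem_Ly y (by rw [hLy']; simp)
            have hlkne : (lk {y} Y).Nonempty :=
              ⟨∅, empty_mem_lk (singleton_mem_of_mem_verts hY hy)⟩
            have hlk := lastOf Y Ly hneY hlastY P' y hLy'
            have hihc : ({∅} : Finset (Finset α)).card + (lk {y} Y).card ≤ N := by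
              have h1 := card_lk_lt (v := y) hY hYne
              simp only [Finset.card_singleton] at hcard ⊢
              omega
            have hres := (ih {∅} (lk {y} Y) hihc cplx_single_empty (cplx_lk hY) ∅
              (verts (lk {y} Y)) (Finset.empty_subset _) (Finset.Subset.refl _)
              StarDecV.base hlk).1
            rw [lk_inr_join]
            have hset : verts (join ({∅} : Finset (Finset α)) (lk {y} Y)) =
                (∅ : Finset α).image Sum.inl ∪ ((verts (lk {y} Y)).image Sum.inr) := by
              rw [verts_join hXsne hlkne, verts_single_empty]
            rw [hset]
            exact hres
        exact ⟨by simpa using hmain, fun _ => hmain⟩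
    | step _ _ kX hkX hpureX Lx hneX hndX hVX hordX hlinkX hlastX =>
      cases h2 with
      | base =>
        -- Y = {∅}
        obtain ⟨iX, hiX, hX₀eq⟩ := hordX
        have hXne : X.Nonempty := hpureX.1
        have hYsne : ({∅} : Finset (Finset β)).Nonempty := ⟨∅, Finset.mem_singleton_self _⟩
        have hpureJ : PureDim (join X ({∅} : Finset (Finset β))) kX := by
          have := pure_join hpureX (pure_single_empty (V := β))
          rwa [show kX + (-1 : ℤ) + 1 = kX by ring] at this
        have hmem_Lx : ∀ a, a ∈ Lx → a ∈ verts X := by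
          intro a ha; rw [← hVX]; exact List.mem_toFinset.2 ha
        have hmain : StarDecV (join X ({∅} : Finset (Finset β))) (X₀.image Sum.inl) := by
          refine stepBuilder _ _ kX hkX hpureJ (Lx.map Sum.inl) (by simp [hneX])
            (hndX.map Sum.inl_injective) ?_ ?_ ?_ ?_
          · rw [toFinset_map_list, hVX, verts_join hXne hYsne, verts_single_empty]
            simp
          · refine ⟨(Lx.take iX).map Sum.inl, (Lx.drop iX).map Sum.inl, ?_, ?_, ?_⟩
            · rw [← List.map_append, List.take_append_drop]
            · simp only [ne_eq, List.map_eq_nil_iff, List.drop_eq_nil_iff, not_le]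
              omega
            · rw [toFinset_map_list, hX₀eq]
          · intro P v S hPS hSne
            obtain ⟨P', x, S', hLx', hP', rfl, rfl⟩ := map_eq_append_cons hPS
            have hS'ne : S' ≠ [] := by intro h; subst h; exact hSne rfl
            have hx : x ∈ verts X := hmem_Lx x (by rw [hLx']; simp)
            have hlkne : (lk {x} X).Nonempty :=
              ⟨∅, empty_mem_lk (singleton_mem_of_mem_verts hX hx)⟩
            have hlk := linkOf X Lx hlinkX P' x S' hLx' hS'ne
            have hihc : (lk {x} X).card + ({∅} : Finset (Finset β)).card ≤ N := by
              have h1 := card_lk_lt (v := x) hX hXne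
              simp only [Finset.card_singleton] at hcard ⊢
              omega
            have hres := (ih (lk {x} X) {∅} hihc (cplx_lk hX) cplx_single_empty
              (verts (lk {x} X) ∩ S'.toFinset) ∅ Finset.inter_subset_left
              (Finset.empty_subset _) hlk StarDecV.base).1
            rw [lk_inl_join]
            have hset : verts (join (lk {x} X) ({∅} : Finset (Finset β))) ∩
                ((S'.map Sum.inl).toFinset) =
                ((verts (lk {x} X) ∩ S'.toFinset).image Sum.inl) ∪
                  (∅ : Finset β).image Sum.inr := by
              rw [verts_join hlkne hYsne, verts_single_empty, toFinset_map_list]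
              ext z
              cases z <;> simp
            rw [hset]
            exact hres
          · intro P v hPS
            obtain ⟨P', x, S', hLx', hP', rfl, hS'⟩ := map_eq_append_cons hPS
            have : S' = [] := by
              cases S' with
              | nil => rfl
              | cons a t => simp at hS'
            subst this
            have hx : x ∈ verts X := hmem_Lx x (by rw [hLx']; simp)
            have hlkne : (lk {x} X).Nonempty :=
              ⟨∅, empty_mem_lk (singleton_mem_of_mem_verts hX hx)⟩
            have hlk := lastOf X Lx hneX hlastX P' x hLx'
            have hihc : (lk {x} X).card + ({∅} : Finset (Finset β)).card ≤ N := by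
              have h1 := card_lk_lt (v := x) hX hXne
              simp only [Finset.card_singleton] at hcard ⊢
              omega
            have hres := (ih (lk {x} X) {∅} hihc (cplx_lk hX) cplx_single_empty
              (verts (lk {x} X)) ∅ (Finset.Subset.refl _) (Finset.empty_subset _)
              hlk StarDecV.base).1
            rw [lk_inl_join]
            have hset : verts (join (lk {x} X) ({∅} : Finset (Finset β))) =
                ((verts (lk {x} X)).image Sum.inl) ∪ (∅ : Finset β).image Sum.inr := by
              rw [verts_join hlkne hYsne, verts_single_empty]
            rw [hset]
            exact hres
        refine ⟨by simpa using hmain, fun h => by simp at h⟩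
      | step _ _ kY hkY hpureY Ly hneY hndY hVY hordY hlinkY hlastY =>
        obtain ⟨iX, hiX, hX₀eq⟩ := hordX
        obtain ⟨iY, hiY, hY₀eq⟩ := hordY
        have hXne : X.Nonempty := hpureX.1
        have hYne : Y.Nonempty := hpureY.1
        obtain ⟨ylast, hylastdef⟩ : ∃ y, y = Ly.getLast hneY := ⟨_, rfl⟩
        have hLysplit : Ly = Ly.dropLast ++ [ylast] := by
          rw [hylastdef]; exact (List.dropLast_append_getLast hneY).symm
        have hmem_Lx : ∀ a, a ∈ Lx → a ∈ verts X := fun a ha => by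
          rw [← hVX]; exact List.mem_toFinset.2 ha
        have hmem_Ly : ∀ b, b ∈ Ly → b ∈ verts Y := fun b hb => by
          rw [← hVY]; exact List.mem_toFinset.2 hb
        have hylastv : ylast ∈ verts Y := hmem_Ly ylast (by rw [hLysplit]; simp)
        have hdropXne : Lx.drop iX ≠ [] := by
          simp only [ne_eq, List.drop_eq_nil_iff, not_le]; omega
        have hsplitX : ∀ a : α, a ∈ Lx ↔ a ∈ Lx.take iX ∨ a ∈ Lx.drop iX := by
          intro a
          constructor
          · intro h
            rw [← List.take_append_drop iX Lx] at h
            exact List.mem_append.1 h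
          · rintro (h | h)
            · exact List.take_subset _ _ h
            · exact List.drop_subset _ _ h
        have hsplitY : ∀ b : β, b ∈ Ly ↔ b ∈ Ly.dropLast ∨ b = ylast := by
          intro b
          constructor
          · intro h
            rw [hLysplit] at h
            simpa using List.mem_append.1 h
          · rintro (h | h)
            · exact List.dropLast_subset _ h
            · subst h; rw [hLysplit]; simp
        have hdropsplit : Ly.drop iY = Ly.dropLast.drop iY ++ [ylast] := by
          conv_lhs => rw [hLysplit]
          rw [List.drop_append]
          have hl : iY - Ly.dropLast.length = 0 := by
            have := List.length_dropLast (xs := Ly)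
            omega
          rw [hl]
          simp
        -- reusable star-decomposability facts
        have SDV_Y_full : StarDecV Y (verts Y) := by
          have := stepAny Y kY hkY hpureY Ly hneY hndY hVY hlinkY hlastY [] Ly rfl hneY
          rwa [hVY] at this
        have SDV_Y_last : StarDecV Y ({ylast} : Finset β) := by
          have := stepAny Y kY hkY hpureY Ly hneY hndY hVY hlinkY hlastY Ly.dropLast [ylast]
            hLysplit (by simp)
          simpa using this
        have SDV_X_X₀ : StarDecV X X₀ := by
          have := stepAny X kX hkX hpureX Lx hneX hndX hVX hlinkX hlastX (Lx.take iX)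
            (Lx.drop iX) (List.take_append_drop iX Lx).symm hdropXne
          rwa [← hX₀eq] at this
        have SDV_X_full : StarDecV X (verts X) := by
          have := stepAny X kX hkX hpureX Lx hneX hndX hVX hlinkX hlastX [] Lx rfl hneX
          rwa [hVX] at this
        -- the interleaved order
        obtain ⟨A, hAdef⟩ : ∃ A, A = (Lx.take iX).map (Sum.inl : α → α ⊕ β) := ⟨_, rfl⟩
        obtain ⟨B, hBdef⟩ : ∃ B, B = (Ly.dropLast).map (Sum.inr : β → α ⊕ β) := ⟨_, rfl⟩
        obtain ⟨C, hCdef⟩ : ∃ C, C = (Lx.drop iX).map (Sum.inl : α → α ⊕ β) := ⟨_, rfl⟩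
        obtain ⟨D, hDdef⟩ : ∃ D, D = ([ylast] : List β).map (Sum.inr : β → α ⊕ β) := ⟨_, rfl⟩
        obtain ⟨L, hLdef⟩ : ∃ L, L = A ++ (B ++ (C ++ D)) := ⟨_, rfl⟩
        have hneL : L ≠ [] := by rw [hLdef, hDdef]; simp
        have hperm : L.Perm (Lx.map Sum.inl ++ Ly.map Sum.inr) := by
          have h1 : (B ++ (C ++ D)).Perm (C ++ (B ++ D)) := by
            have := (List.perm_append_comm (l₁ := B) (l₂ := C)).append_right D
            simpa [List.append_assoc] using this
          have h2 := h1.append_left A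
          have h3 : A ++ (C ++ (B ++ D)) = Lx.map Sum.inl ++ Ly.map Sum.inr := by
            rw [← List.append_assoc, hAdef, hCdef, ← List.map_append, List.take_append_drop,
              hBdef, hDdef, ← List.map_append, ← hLysplit]
          rw [hLdef]
          exact h3 ▸ h2
        have hndL : L.Nodup := by
          rw [hperm.nodup_iff, List.nodup_append]
          refine ⟨hndX.map Sum.inl_injective, hndY.map Sum.inr_injective, ?_⟩
          intro z hz1 w hz2
          obtain ⟨a, -, rfl⟩ := List.mem_map.1 hz1
          obtain ⟨b, -, rfl⟩ := List.mem_map.1 hz2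
          exact Sum.inl_ne_inr
        have hpermF : L.toFinset = (Lx.map (Sum.inl : α → α ⊕ β) ++
            Ly.map Sum.inr).toFinset := by
          ext z; simp [hperm.mem_iff]
        have hVL : L.toFinset = verts (join X Y) := by
          rw [hpermF, List.toFinset_append, toFinset_map_list, toFinset_map_list,
            hVX, hVY, verts_join hXne hYne]
        -- link condition for the combined order
        have hlink' : ∀ P v S, L = P ++ v :: S → S ≠ [] →
            StarDecV (lk {v} (join X Y)) (verts (lk {v} (join X Y)) ∩ S.toFinset) := by
          intro P v S hPS hSne
          rw [hLdef] at hPS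
          rcases append_eq_append_cons hPS with ⟨S₁, hA1, hS⟩ | ⟨P₂, hP2, h2⟩
          · -- v lies in A
            obtain ⟨P', x, S₁', hTake, hP', rfl, rfl⟩ := map_eq_append_cons (hAdef ▸ hA1)
            have hLxdec : Lx = P' ++ x :: (S₁' ++ Lx.drop iX) := by
              conv_lhs => rw [← List.take_append_drop iX Lx, hTake]
              simp [List.append_assoc]
            have hx : x ∈ verts X := hmem_Lx x (by rw [hLxdec]; simp)
            have hlkX := linkOf X Lx hlinkX P' x _ hLxdec (by simp [hdropXne])
            have hlkne : (lk {x} X).Nonempty :=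
              ⟨∅, empty_mem_lk (singleton_mem_of_mem_verts hX hx)⟩
            have hihc : (lk {x} X).card + Y.card ≤ N := by
              have h1 := card_lk_lt (v := x) hX hXne; omega
            have hres := (ih (lk {x} X) Y hihc (cplx_lk hX) hY
              (verts (lk {x} X) ∩ (S₁' ++ Lx.drop iX).toFinset) (verts Y)
              Finset.inter_subset_left (Finset.Subset.refl _) hlkX SDV_Y_full).1
            rw [lk_inl_join]
            have hset : verts (join (lk {x} X) Y) ∩ S.toFinset =
                (verts (lk {x} X) ∩ (S₁' ++ Lx.drop iX).toFinset).image Sum.inl ∪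
                  (verts Y).image Sum.inr := by
              rw [hS, verts_join hlkne hYne, hBdef, hCdef, hDdef]
              have hbb : ∀ b : β, b ∈ verts Y → b ∈ Ly.dropLast ∨ b = ylast := fun b h =>
                (hsplitY b).1 (by rw [← hVY] at h; exact List.mem_toFinset.1 h)
              ext z
              rcases z with a | b
              · simp only [List.toFinset_append, toFinset_map_list, List.toFinset_cons,
                  List.toFinset_nil, Finset.mem_inter, Finset.mem_union, Finset.mem_image,
                  Finset.mem_insert, Finset.mem_singleton, Finset.notMem_empty,
                  List.mem_toFinset, List.mem_append, List.mem_singleton, Sum.inl.injEq,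
                  Sum.inr.injEq, exists_eq_right, reduceCtorEq, false_and, and_false,
                  exists_false, false_or, or_false]
                try tauto
              · have hb := hbb b
                simp only [List.toFinset_append, toFinset_map_list, List.toFinset_cons,
                  List.toFinset_nil, Finset.mem_inter, Finset.mem_union, Finset.mem_image,
                  Finset.mem_insert, Finset.mem_singleton, Finset.notMem_empty,
                  List.mem_toFinset, List.mem_append, List.mem_singleton, Sum.inl.injEq,
                  Sum.inr.injEq, exists_eq_right, reduceCtorEq, false_and, and_false,
                  exists_false, false_or, or_false]
                tauto
            rw [hset]
            exact hres
          · rcases append_eq_append_cons h2 with ⟨S₁, hB1, hS⟩ | ⟨P₃, hP3, h3⟩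
            · -- v lies in B
              obtain ⟨P', y, S₁', hDL, hP', rfl, rfl⟩ := map_eq_append_cons (hBdef ▸ hB1)
              have hLydec : Ly = P' ++ y :: (S₁' ++ [ylast]) := by
                conv_lhs => rw [hLysplit, hDL]
                simp [List.append_assoc]
              have hy : y ∈ verts Y := hmem_Ly y (by rw [hLydec]; simp)
              have hlkY := linkOf Y Ly hlinkY P' y _ hLydec (by simp)
              have hlkne : (lk {y} Y).Nonempty :=
                ⟨∅, empty_mem_lk (singleton_mem_of_mem_verts hY hy)⟩
              have hihc : X.card + (lk {y} Y).card ≤ N := by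
                have h1 := card_lk_lt (v := y) hY hYne; omega
              have hres := (ih X (lk {y} Y) hihc hX (cplx_lk hY)
                X₀ (verts (lk {y} Y) ∩ (S₁' ++ [ylast]).toFinset)
                hX₀ Finset.inter_subset_left SDV_X_X₀ hlkY).1
              rw [lk_inr_join]
              have hset : verts (join X (lk {y} Y)) ∩ S.toFinset =
                  X₀.image Sum.inl ∪
                    (verts (lk {y} Y) ∩ (S₁' ++ [ylast]).toFinset).image Sum.inr := by
                rw [hS, verts_join hXne hlkne, hCdef, hDdef]
                ext z
                rcases z with a | b
                · have ha1 : a ∈ X₀ ↔ a ∈ Lx.drop iX := by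
                    rw [hX₀eq, List.mem_toFinset]
                  have ha2 : a ∈ Lx.drop iX → a ∈ verts X := fun hh =>
                    hmem_Lx a ((hsplitX a).2 (Or.inr hh))
                  simp only [List.toFinset_append, toFinset_map_list, List.toFinset_cons,
                  List.toFinset_nil, Finset.mem_inter, Finset.mem_union, Finset.mem_image,
                  Finset.mem_insert, Finset.mem_singleton, Finset.notMem_empty,
                  List.mem_toFinset, List.mem_append, List.mem_singleton, Sum.inl.injEq,
                  Sum.inr.injEq, exists_eq_right, reduceCtorEq, false_and, and_false,
                  exists_false, false_or, or_false]
                  tauto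
                · simp only [List.toFinset_append, toFinset_map_list, List.toFinset_cons,
                  List.toFinset_nil, Finset.mem_inter, Finset.mem_union, Finset.mem_image,
                  Finset.mem_insert, Finset.mem_singleton, Finset.notMem_empty,
                  List.mem_toFinset, List.mem_append, List.mem_singleton, Sum.inl.injEq,
                  Sum.inr.injEq, exists_eq_right, reduceCtorEq, false_and, and_false,
                  exists_false, false_or, or_false]
                  try tauto
              rw [hset]
              exact hres
            · rcases append_eq_append_cons h3 with ⟨S₁, hC1, hS⟩ | ⟨P₄, hP4, h4⟩
              · -- v lies in C
                obtain ⟨P', x, S₁', hDR, hP', rfl, rfl⟩ := map_eq_append_cons (hCdef ▸ hC1)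
                have hLxdec : Lx = (Lx.take iX ++ P') ++ x :: S₁' := by
                  conv_lhs => rw [← List.take_append_drop iX Lx, hDR]
                  simp [List.append_assoc]
                have hx : x ∈ verts X := hmem_Lx x (by rw [hLxdec]; simp)
                have hlkne : (lk {x} X).Nonempty :=
                  ⟨∅, empty_mem_lk (singleton_mem_of_mem_verts hX hx)⟩
                have hihc : (lk {x} X).card + Y.card ≤ N := by
                  have h1 := card_lk_lt (v := x) hX hXne; omega
                by_cases hS₁' : S₁' = []
                · -- x is the last vertex of Lx
                  subst hS₁'
                  have hlkX := lastOf X Lx hneX hlastX _ x hLxdec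
                  have hres := (ih (lk {x} X) Y hihc (cplx_lk hX) hY
                    (verts (lk {x} X)) {ylast} (Finset.Subset.refl _)
                    (Finset.singleton_subset_iff.2 hylastv) hlkX SDV_Y_last).2
                    (Finset.card_singleton ylast)
                  rw [lk_inl_join]
                  have hset : verts (join (lk {x} X) Y) ∩ S.toFinset =
                      ({ylast} : Finset β).image Sum.inr := by
                    rw [hS, verts_join hlkne hYne, hDdef]
                    have h3 : ∀ b : β, b = ylast → b ∈ verts Y := fun b h => h ▸ hylastv
                    ext z
                    rcases z with a | b
                    · simp only [List.toFinset_append, toFinset_map_list, List.toFinset_cons,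
                  List.toFinset_nil, Finset.mem_inter, Finset.mem_union, Finset.mem_image,
                  Finset.mem_insert, Finset.mem_singleton, Finset.notMem_empty,
                  List.mem_toFinset, List.mem_append, List.mem_singleton, Sum.inl.injEq,
                  Sum.inr.injEq, exists_eq_right, reduceCtorEq, false_and, and_false,
                  exists_false, false_or, or_false]
                    · have := h3 b
                      simp only [List.toFinset_append, toFinset_map_list, List.toFinset_cons,
                  List.toFinset_nil, Finset.mem_inter, Finset.mem_union, Finset.mem_image,
                  Finset.mem_insert, Finset.mem_singleton, Finset.notMem_empty,
                  List.mem_toFinset, List.mem_append, List.mem_singleton, Sum.inl.injEq,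
                  Sum.inr.injEq, exists_eq_right, reduceCtorEq, false_and, and_false,
                  exists_false, false_or, or_false]
                      exact ⟨fun h => h.2, fun h => ⟨this h, h⟩⟩
                  rw [hset]
                  exact hres
                · have hlkX := linkOf X Lx hlinkX _ x S₁' hLxdec hS₁'
                  have hres := (ih (lk {x} X) Y hihc (cplx_lk hX) hY
                    (verts (lk {x} X) ∩ S₁'.toFinset) {ylast} Finset.inter_subset_left
                    (Finset.singleton_subset_iff.2 hylastv) hlkX SDV_Y_last).1
                  rw [lk_inl_join]
                  have hset : verts (join (lk {x} X) Y) ∩ S.toFinset =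
                      (verts (lk {x} X) ∩ S₁'.toFinset).image Sum.inl ∪
                        ({ylast} : Finset β).image Sum.inr := by
                    rw [hS, verts_join hlkne hYne, hDdef]
                    have h3 : ∀ b : β, b = ylast → b ∈ verts Y := fun b h => h ▸ hylastv
                    ext z
                    rcases z with a | b
                    · simp only [List.toFinset_append, toFinset_map_list, List.toFinset_cons,
                  List.toFinset_nil, Finset.mem_inter, Finset.mem_union, Finset.mem_image,
                  Finset.mem_insert, Finset.mem_singleton, Finset.notMem_empty,
                  List.mem_toFinset, List.mem_append, List.mem_singleton, Sum.inl.injEq,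
                  Sum.inr.injEq, exists_eq_right, reduceCtorEq, false_and, and_false,
                  exists_false, false_or, or_false]
                      try tauto
                    · have := h3 b
                      simp only [List.toFinset_append, toFinset_map_list, List.toFinset_cons,
                  List.toFinset_nil, Finset.mem_inter, Finset.mem_union, Finset.mem_image,
                  Finset.mem_insert, Finset.mem_singleton, Finset.notMem_empty,
                  List.mem_toFinset, List.mem_append, List.mem_singleton, Sum.inl.injEq,
                  Sum.inr.injEq, exists_eq_right, reduceCtorEq, false_and, and_false,
                  exists_false, false_or, or_false]
                      exact ⟨fun h => h.2, fun h => ⟨this h, h⟩⟩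
                  rw [hset]
                  exact hres
              · -- v would lie in D, impossible since S ≠ []
                exfalso
                rw [hDdef] at h4
                cases P₄ with
                | nil =>
                  simp only [List.map_cons, List.map_nil, List.nil_append,
                    List.cons.injEq] at h4
                  exact hSne h4.2.symm
                | cons p P₅ =>
                  simp only [List.map_cons, List.map_nil, List.cons_append,
                    List.cons.injEq] at h4
                  have := h4.2
                  exact absurd this.symm (by simp)
        -- last vertex condition for the combined order
        have hlast' : ∀ P v, L = P ++ [v] →
            StarDecV (lk {v} (join X Y)) (verts (lk {v} (join X Y))) := by
          intro P v hPS
          have hL' : L = (A ++ (B ++ C)) ++ [Sum.inr ylast] := by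
            rw [hLdef, hDdef]
            simp [List.append_assoc]
          have hv : v = Sum.inr ylast := by
            rw [← last_of_append_singleton hPS hneL, last_of_append_singleton hL' hneL]
          subst hv
          rw [lk_inr_join]
          have hlkY := lastOf Y Ly hneY hlastY Ly.dropLast ylast hLysplit
          have hlkne : (lk {ylast} Y).Nonempty :=
            ⟨∅, empty_mem_lk (singleton_mem_of_mem_verts hY hylastv)⟩
          have hihc : X.card + (lk {ylast} Y).card ≤ N := by
            have h1 := card_lk_lt (v := ylast) hY hYne; omega
          have hres := (ih X (lk {ylast} Y) hihc hX (cplx_lk hY) (verts X) (verts (lk {ylast} Y))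
            (Finset.Subset.refl _) (Finset.Subset.refl _) SDV_X_full hlkY).1
          rw [verts_join hXne hlkne]
          exact hres
        have hbuild : ∀ (Z : Finset (α ⊕ β)) P S, L = P ++ S → S ≠ [] → Z = S.toFinset →
            StarDecV (join X Y) Z := by
          intro Z P S h hS hZ
          exact stepBuilder _ _ (kX + kY + 1) (by omega) (pure_join hpureX hpureY) L hneL hndL
            hVL ⟨P, S, h, hS, hZ⟩ hlink' hlast'
        constructor
        · refine hbuild _ (A ++ (Ly.dropLast.take iY).map Sum.inr)
            ((Ly.dropLast.drop iY).map Sum.inr ++ (C ++ D)) ?_ (by rw [hDdef]; simp) ?_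
          · rw [hLdef, hBdef]
            rw [show ((Ly.dropLast).map (Sum.inr : β → α ⊕ β)) =
                (Ly.dropLast.take iY).map Sum.inr ++ (Ly.dropLast.drop iY).map Sum.inr by
              rw [← List.map_append, List.take_append_drop]]
            simp only [List.append_assoc]
          · rw [hCdef, hDdef, hX₀eq, hY₀eq]
            have hb : ∀ b : β, b ∈ Ly.drop iY ↔ b ∈ Ly.dropLast.drop iY ∨ b = ylast := by
              intro b; rw [hdropsplit]; simp
            ext z
            rcases z with a | b
            · simp only [List.toFinset_append, toFinset_map_list, List.toFinset_cons,
                  List.toFinset_nil, Finset.mem_inter, Finset.mem_union, Finset.mem_image,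
                  Finset.mem_insert, Finset.mem_singleton, Finset.notMem_empty,
                  List.mem_toFinset, List.mem_append, List.mem_singleton, Sum.inl.injEq,
                  Sum.inr.injEq, exists_eq_right, reduceCtorEq, false_and, and_false,
                  exists_false, false_or, or_false]
              try tauto
            · have := hb b
              simp only [List.toFinset_append, toFinset_map_list, List.toFinset_cons,
                  List.toFinset_nil, Finset.mem_inter, Finset.mem_union, Finset.mem_image,
                  Finset.mem_insert, Finset.mem_singleton, Finset.notMem_empty,
                  List.mem_toFinset, List.mem_append, List.mem_singleton, Sum.inl.injEq,
                  Sum.inr.injEq, exists_eq_right, reduceCtorEq, false_and, and_false,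
                  exists_false, false_or, or_false]
              tauto
        · intro hcard1
          have hylastmem : ylast ∈ Y₀ := by
            rw [hY₀eq, List.mem_toFinset, hdropsplit]
            simp
          have hY₀eq' : Y₀ = {ylast} := by
            obtain ⟨a, ha⟩ := Finset.card_eq_one.1 hcard1
            rw [ha] at hylastmem ⊢
            rw [Finset.mem_singleton] at hylastmem
            rw [hylastmem]
          refine hbuild _ (A ++ (B ++ C)) D ?_ (by rw [hDdef]; simp) ?_
          · rw [hLdef]
            simp [List.append_assoc]
          · rw [hY₀eq', hDdef]
            simp

end MainAux

/-- If the pairs `(sd X, X₀)` and `(sd Y, Y₀)` are star decomposable in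
vertices, then so is `(sd (X * Y), X₀ ⊔ Y₀)`.  Moreover if `|Y₀| = 1`, then
`(sd (X * Y), Y₀)` is star decomposable in vertices. -/
theorem join_starDecV_pairs {α β : Type*} [DecidableEq α] [DecidableEq β]
    (X : Finset (Finset α)) (Y : Finset (Finset β)) (hX : IsCplx X) (hY : IsCplx Y)
    (hpX : ∃ dX : ℤ, PureDim X dX) (hpY : ∃ dY : ℤ, PureDim Y dY)
    (X₀ : Finset α) (Y₀ : Finset β) (hX₀ : X₀ ⊆ verts X) (hY₀ : Y₀ ⊆ verts Y)
    (h1 : StarDecV X X₀) (h2 : StarDecV Y Y₀) :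
    StarDecV (join X Y) (X₀.image Sum.inl ∪ Y₀.image Sum.inr) ∧
      (Y₀.card = 1 → StarDecV (join X Y) (Y₀.image Sum.inr)) := by
  exact joinAux (X.card + Y.card) X Y le_rfl hX hY X₀ Y₀ hX₀ hY₀ h1 h2

end Paper
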